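/- Let X be a topological space that is not a Baire space. Then the countable power X^ℕ, with the product topology, is meager in itself. -/

import Mathlib

open Set Function

lemma my_isNowhereDense_isMeagre {X : Type*} [TopologicalSpace X] {s : Set X}
    (h : IsNowhereDense s) : IsMeagre s := by
  rw [isMeagre_iff_countable_union_isNowhereDense]
  exact ⟨{s}, by simpa using h, countable_singleton _, by simp⟩

/-- If `X` is not a Baire space, then the countable power `X^ℕ` is meager in itself. -/
theorem pow_meagre_of_not_baire
    (X : Type*) [TopologicalSpace X] (hX : ¬ BaireSpace X) :
    IsMeagre (Set.univ : Set (ℕ → X)) := by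
  classical
  have h : ¬ ∀ f : ℕ → Set X, (∀ n, IsOpen (f n)) → (∀ n, Dense (f n)) → Dense (⋂ n, f n) :=
    fun h => hX ⟨h⟩
  push_neg at h
  obtain ⟨U, hUo, hUd, hUnd⟩ := h
  rw [dense_iff_inter_open] at hUnd
  push_neg at hUnd
  obtain ⟨W, hWo, hWne, hWdisj⟩ := hUnd
  obtain ⟨w, hw⟩ := hWne
  -- pieces
  set C : Set (ℕ → X) := {g | ∀ n, g n ∉ W} with hC
  set A : ℕ → ℕ → Set (ℕ → X) := fun n k => (fun g : ℕ → X => g n) ⁻¹' (U k)ᶜ with hA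
  -- C is closed nowhere dense
  have hCclosed : IsClosed C := by
    have : C = ⋂ n, (fun g : ℕ → X => g n) ⁻¹' Wᶜ := by
      ext g; simp [hC]
    rw [this]
    exact isClosed_iInter fun n => (hWo.isClosed_compl).preimage (continuous_apply n)
  have hCmeagre : IsMeagre C := by
    apply my_isNowhereDense_isMeagre
    rw [hCclosed.isNowhereDense_iff]
    rw [eq_empty_iff_forall_notMem]
    intro g hg
    obtain ⟨I, u, hu, hsub⟩ := isOpen_pi_iff.mp isOpen_interior g hg
    obtain ⟨n, hn⟩ := Finset.exists_notMem I
    set g' : ℕ → X := Function.update g n w with hg'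
    have hg'mem : g' ∈ (I : Set ℕ).pi u := by
      intro a ha
      have hne : a ≠ n := fun e => hn (e ▸ ha)
      rw [hg', Function.update_of_ne hne]
      exact (hu a ha).2
    have : g' ∈ C := interior_subset (hsub hg'mem)
    exact this n (by simp [hg', hw])
  -- each A n k is closed nowhere dense
  have hAmeagre : ∀ n k, IsMeagre (A n k) := by
    intro n k
    apply my_isNowhereDense_isMeagre
    have hclosed : IsClosed (A n k) := ((hUo k).isClosed_compl).preimage (continuous_apply n)
    rw [hclosed.isNowhereDense_iff, eq_empty_iff_forall_notMem]
    intro g hg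
    have himg : Function.eval n '' interior (A n k) ⊆ (U k)ᶜ := by
      rintro _ ⟨h, hh, rfl⟩
      exact (interior_subset hh : h ∈ A n k)
    have hopen : IsOpen (Function.eval n '' interior (A n k)) :=
      isOpenMap_eval n _ isOpen_interior
    have hne : (Function.eval n '' interior (A n k)).Nonempty := ⟨g n, g, hg, rfl⟩
    obtain ⟨x, hx⟩ := ((hUd k).inter_open_nonempty _ hopen hne)
    exact himg hx.1 hx.2
  -- covering
  have hcover : (Set.univ : Set (ℕ → X)) ⊆ C ∪ ⋃ n, ⋃ k, A n k := by
    intro g _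
    by_cases hgC : ∀ n, g n ∉ W
    · exact Or.inl hgC
    · push_neg at hgC
      obtain ⟨n, hn⟩ := hgC
      have : g n ∉ ⋂ k, U k := fun hmem =>
        (eq_empty_iff_forall_notMem.mp hWdisj (g n)) ⟨hn, hmem⟩
      rw [mem_iInter] at this
      push_neg at this
      obtain ⟨k, hk⟩ := this
      exact Or.inr (mem_iUnion.mpr ⟨n, mem_iUnion.mpr ⟨k, hk⟩⟩)
  have hAunion : IsMeagre (⋃ n, ⋃ k, A n k) :=
    isMeagre_iUnion fun n => isMeagre_iUnion fun k => hAmeagre n k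
  have : IsMeagre (C ∪ ⋃ n, ⋃ k, A n k) := by
    have := isMeagre_iUnion (f := fun b : ℕ => if b = 0 then C else ⋃ n, ⋃ k, A n k)
      (fun b => by by_cases hb : b = 0 <;> simp [hb, hCmeagre, hAunion])
    refine this.mono ?_
    intro g hg
    rcases hg with hg | hg
    · exact mem_iUnion.mpr ⟨0, by simpa using hg⟩
    · exact mem_iUnion.mpr ⟨1, by simpa using hg⟩
  exact this.mono hcover
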